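/- Let 0 < p ≤ 1, let X be a real normed space with base point 0 (the zero vector), let V ⊆ X be a linear subspace, and let P : X → X be a bounded linear projection with P(X) = V, P∘P = P, and ‖P‖ ≤ C. Then for every μ ∈ P(V) (viewed inside P(X)) one has ‖μ‖_{p,V} ≤ C·‖μ‖_{p,X}, where the free p-norms are taken with respect to the metrics induced by the norm of X on V and on X respectively. -/

import Mathlib

open scoped BigOperators Classical

noncomputable section

/-- The point mass `δ(x)` in the free space construction: the indicator function of `{x}`
if `x ≠ base`, and `0` if `x = base`. -/
def freeDelta {M : Type*} (base x : M) : M → ℝ :=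
  fun z => if x = base then 0 else if z = x then 1 else 0

/-- The set of admissible quantities `(∑ j |a_j|^p)^{1/p}` arising from expansions
`μ = ∑ j a_j (δ(x_j) - δ(y_j))/d(x_j, y_j)` with all points `x_j ≠ y_j` lying in `N`. -/
def freeNormSet {M : Type*} [MetricSpace M] (base : M) (N : Set M) (p : ℝ) (μ : M → ℝ) :
    Set ℝ :=
  {r | ∃ (n : ℕ) (a : Fin n → ℝ) (x y : Fin n → M),
    (∀ j, x j ∈ N) ∧ (∀ j, y j ∈ N) ∧ (∀ j, x j ≠ y j) ∧
    μ = (fun z => ∑ j, a j *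
      ((freeDelta base (x j) z - freeDelta base (y j) z) / dist (x j) (y j))) ∧
    r = (∑ j, |a j| ^ p) ^ (1 / p)}

/-- The Lipschitz-free `p`-norm of `μ` computed with expansions supported on `N ⊆ M`. -/
def freeNormOn {M : Type*} [MetricSpace M] (base : M) (N : Set M) (p : ℝ) (μ : M → ℝ) : ℝ :=
  sInf (freeNormSet base N p μ)

/-- The Lipschitz-free `p`-norm of `μ ∈ P(M)`. -/
def freeNorm {M : Type*} [MetricSpace M] (base : M) (p : ℝ) (μ : M → ℝ) : ℝ :=
  freeNormOn base Set.univ p μ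



lemma freeDelta_base {M : Type*} (base w : M) : freeDelta base w base = 0 := by
  unfold freeDelta
  by_cases h : w = base
  · simp [h]
  · simp [h, Ne.symm h]

lemma freeDelta_self {M : Type*} (base z : M) : freeDelta base base z = 0 := by
  simp [freeDelta]

lemma freeDelta_of_ne {M : Type*} {base z : M} (w : M) (h : z ≠ base) :
    freeDelta base w z = if w = z then 1 else 0 := by
  unfold freeDelta
  by_cases hw : w = base
  · subst hw
    simp [Ne.symm h]
  · by_cases hz : z = w
    · simp [hw, hz]
    · simp [hw, hz, Ne.symm hz]

lemma freeNormSet_nonneg {M : Type*} [MetricSpace M] {base : M} {N : Set M} {p : ℝ}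
    {μ : M → ℝ} {r : ℝ} (hr : r ∈ freeNormSet base N p μ) : 0 ≤ r := by
  obtain ⟨n, a, x, y, -, -, -, -, rfl⟩ := hr
  exact Real.rpow_nonneg
    (Finset.sum_nonneg fun j _ => Real.rpow_nonneg (abs_nonneg _) p) _

lemma freeNormSet_univ_nonempty {M : Type*} [MetricSpace M] (base : M) (p : ℝ)
    (μ : M → ℝ) (hfin : (Function.support μ).Finite) (h0 : μ base = 0) :
    (freeNormSet base Set.univ p μ).Nonempty := by
  classical
  set s := hfin.toFinset with hs
  set n := s.card with hn
  set e : Fin n ≃ s := s.equivFin.symm with he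
  have hes : ∀ j : Fin n, μ ((e j : M)) ≠ 0 := by
    intro j
    have := (e j).2
    exact hfin.mem_toFinset.mp this
  have hne : ∀ j : Fin n, (e j : M) ≠ base := by
    intro j hj
    exact hes j (hj ▸ h0)
  refine ⟨_, n, fun j => μ ((e j : M)) * dist ((e j : M)) base, fun j => (e j : M),
    fun j => base, fun j => trivial, fun j => trivial, hne, ?_, rfl⟩
  funext z
  have hterm : ∀ j : Fin n,
      μ ((e j : M)) * dist ((e j : M)) base *
        ((freeDelta base ((e j : M)) z - freeDelta base base z) / dist ((e j : M)) base)
      = if z = (e j : M) then μ ((e j : M)) else 0 := by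
    intro j
    have hd : dist ((e j : M)) base ≠ 0 := dist_ne_zero.mpr (hne j)
    rw [freeDelta_self, sub_zero]
    have hδ : freeDelta base ((e j : M)) z = if z = (e j : M) then 1 else 0 := by
      unfold freeDelta
      simp [hne j]
    rw [hδ]
    by_cases hz : z = (e j : M)
    · simp only [if_pos hz]
      field_simp
    · simp only [if_neg hz]
      simp
  simp only
  rw [Finset.sum_congr rfl (fun j _ => hterm j)]
  have h1 : (∑ j : Fin n, if z = (e j : M) then μ ((e j : M)) else 0)
      = ∑ w : s, if z = (w : M) then μ (w : M) else 0 :=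
    Fintype.sum_equiv e _ _ (fun j => rfl)
  rw [h1]
  rw [Finset.sum_coe_sort s (fun w => if z = w then μ w else 0)]
  rw [Finset.sum_ite_eq s z (fun w => μ w)]
  by_cases hz : z ∈ s
  · simp [hz]
  · simp only [hz, if_neg]
    have : μ z = 0 := by
      by_contra h
      exact hz (by rw [hs, Set.Finite.mem_toFinset]; exact h)
    simp [this]

/-- If `P` is a bounded linear projection of a normed space `X` onto a
subspace `V` with `‖P‖ ≤ C`, then `‖μ‖_{p,V} ≤ C·‖μ‖_{p,X}` for every `μ ∈ P(V)`. -/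
theorem projection_subspace_norm_le {X : Type*} [NormedAddCommGroup X] [NormedSpace ℝ X]
    (p : ℝ) (hp0 : 0 < p) (hp1 : p ≤ 1)
    (V : Submodule ℝ X) (P : X →L[ℝ] X) (C : ℝ)
    (hrange : Set.range P = (V : Set X))
    (hidem : ∀ x, P (P x) = P x)
    (hnorm : ‖P‖ ≤ C)
    (μ : X → ℝ) (hfin : (Function.support μ).Finite) (h0 : μ 0 = 0)
    (hsupp : Function.support μ ⊆ (V : Set X)) :
    freeNormOn (0 : X) (V : Set X) p μ ≤ C * freeNorm (0 : X) p μ := by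
  classical
  have hC : 0 ≤ C := le_trans (norm_nonneg P) hnorm
  have hVbdd : BddBelow (freeNormSet (0:X) (V : Set X) p μ) :=
    ⟨0, fun r hr => freeNormSet_nonneg hr⟩
  have hXne : (freeNormSet (0:X) Set.univ p μ).Nonempty :=
    freeNormSet_univ_nonempty _ _ _ hfin h0
  have hfix : ∀ w : X, w ∈ (V : Set X) → P w = w := by
    intro w hw
    rw [← hrange] at hw
    obtain ⟨u, rfl⟩ := hw
    exact hidem u
  by_cases hμ0 : μ = 0
  · have h0mem : (0:ℝ) ∈ freeNormSet (0:X) (V : Set X) p μ := by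
      refine ⟨0, Fin.elim0, Fin.elim0, Fin.elim0, fun j => j.elim0, fun j => j.elim0,
        fun j => j.elim0, ?_, ?_⟩
      · funext z
        simp [hμ0]
      · have hzero : (∑ j : Fin 0, |(Fin.elim0 j : ℝ)| ^ p) = 0 := by simp
        rw [hzero, Real.zero_rpow (one_div_ne_zero hp0.ne')]
    have h1 : freeNormOn (0:X) (V : Set X) p μ ≤ 0 := csInf_le hVbdd h0mem
    have h2 : 0 ≤ freeNorm (0:X) p μ :=
      le_csInf hXne fun r hr => freeNormSet_nonneg hr
    exact h1.trans (mul_nonneg hC h2)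
  · obtain ⟨v, hv⟩ : ∃ v, μ v ≠ 0 := by
      by_contra h
      push_neg at h
      exact hμ0 (funext h)
    have hvV : v ∈ (V : Set X) := hsupp hv
    have hv0 : v ≠ 0 := fun h => hv (h ▸ h0)
    have key : ∀ r ∈ freeNormSet (0:X) Set.univ p μ,
        freeNormOn (0:X) (V : Set X) p μ ≤ C * r := by
      rintro r ⟨n, a, x, y, -, -, hxy, hexp, rfl⟩
      have hdne : ∀ j, dist (x j) (y j) ≠ 0 := fun j => dist_ne_zero.mpr (hxy j)
      set c : Fin n → ℝ := fun j => a j / dist (x j) (y j) with hc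
      set x' : Fin n → X := fun j => if P (x j) = P (y j) then v else P (x j) with hx'
      set y' : Fin n → X := fun j => if P (x j) = P (y j) then 0 else P (y j) with hy'
      set a' : Fin n → ℝ := fun j => if P (x j) = P (y j) then 0
        else c j * dist (P (x j)) (P (y j)) with ha'
      set s : Finset X :=
        hfin.toFinset ∪ (Finset.image x Finset.univ ∪ Finset.image y Finset.univ) with hsdef
      have hss : ∀ w, μ w ≠ 0 → w ∈ s :=
        fun w hw => Finset.mem_union.mpr (Or.inl (hfin.mem_toFinset.mpr hw))
      have hxs : ∀ j, x j ∈ s := fun j => Finset.mem_union.mpr (Or.inr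
        (Finset.mem_union.mpr (Or.inl (Finset.mem_image.mpr ⟨j, Finset.mem_univ j, rfl⟩))))
      have hys : ∀ j, y j ∈ s := fun j => Finset.mem_union.mpr (Or.inr
        (Finset.mem_union.mpr (Or.inr (Finset.mem_image.mpr ⟨j, Finset.mem_univ j, rfl⟩))))
      have hexp' : ∀ z, μ z
          = ∑ j, (c j * freeDelta (0:X) (x j) z - c j * freeDelta (0:X) (y j) z) := by
        intro z
        have h := congrFun hexp z
        rw [h]
        apply Finset.sum_congr rfl
        intro j _
        simp only [hc, div_eq_mul_inv]
        ring
      have hcore : ∀ z,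
          (∑ j, (c j * freeDelta (0:X) (P (x j)) z - c j * freeDelta (0:X) (P (y j)) z))
          = μ z := by
        intro z
        by_cases hz : z = 0
        · subst hz
          simp [freeDelta_base, h0]
        · set t : Finset X := s.filter (fun w => P w = z) with ht
          have hsumδ : ∀ u, u ∈ s →
              (∑ w ∈ t, freeDelta (0:X) u w) = if P u = z then 1 else 0 := by
            intro u hu
            by_cases hu0 : u = 0
            · subst hu0
              have hd0 : ∀ w : X, freeDelta (0:X) 0 w = 0 := by
                intro w
                simp [freeDelta]
              rw [Finset.sum_congr rfl (fun w _ => hd0 w), Finset.sum_const_zero]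
              rw [map_zero]
              simp [Ne.symm hz]
            · have hδ : ∀ w : X, freeDelta (0:X) u w = if w = u then 1 else 0 := by
                intro w
                unfold freeDelta
                simp [hu0]
              rw [Finset.sum_congr rfl (fun w _ => hδ w)]
              rw [Finset.sum_ite_eq' t u (fun _ => (1:ℝ))]
              have hmemiff : u ∈ t ↔ P u = z := by
                rw [ht, Finset.mem_filter]
                exact ⟨fun h => h.2, fun h => ⟨hu, h⟩⟩
              by_cases hut : P u = z
              · rw [if_pos (hmemiff.mpr hut), if_pos hut]
              · rw [if_neg (fun hm => hut (hmemiff.mp hm)), if_neg hut]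
          have hμt : (∑ w ∈ t, μ w) = μ z := by
            have h1 : ∀ w ∈ t, μ w = if w = z then μ z else 0 := by
              intro w hw
              rcases Finset.mem_filter.mp hw with ⟨-, hPw⟩
              by_cases hwz : w = z
              · simp [hwz]
              · rw [if_neg hwz]
                by_contra hne
                have hwV : w ∈ (V : Set X) := hsupp hne
                exact hwz ((hfix w hwV).symm.trans hPw)
            rw [Finset.sum_congr rfl h1, Finset.sum_ite_eq' t z (fun _ => μ z)]
            by_cases hzt : z ∈ t
            · rw [if_pos hzt]
            · rw [if_neg hzt]
              by_contra hne
              have hμz : μ z ≠ 0 := fun h => hne h.symm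
              exact hzt (Finset.mem_filter.mpr ⟨hss z hμz, hfix z (hsupp hμz)⟩)
          calc (∑ j, (c j * freeDelta (0:X) (P (x j)) z - c j * freeDelta (0:X) (P (y j)) z))
              = ∑ j, (c j * (if P (x j) = z then 1 else 0)
                  - c j * (if P (y j) = z then 1 else 0)) := by
                apply Finset.sum_congr rfl
                intro j _
                rw [freeDelta_of_ne _ hz, freeDelta_of_ne _ hz]
            _ = ∑ j, (c j * (∑ w ∈ t, freeDelta (0:X) (x j) w)
                  - c j * (∑ w ∈ t, freeDelta (0:X) (y j) w)) := by
                apply Finset.sum_congr rfl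
                intro j _
                rw [hsumδ _ (hxs j), hsumδ _ (hys j)]
            _ = ∑ j, ∑ w ∈ t, (c j * freeDelta (0:X) (x j) w
                  - c j * freeDelta (0:X) (y j) w) := by
                apply Finset.sum_congr rfl
                intro j _
                rw [Finset.sum_sub_distrib, ← Finset.mul_sum, ← Finset.mul_sum]
            _ = ∑ w ∈ t, ∑ j, (c j * freeDelta (0:X) (x j) w
                  - c j * freeDelta (0:X) (y j) w) := Finset.sum_comm
            _ = ∑ w ∈ t, μ w := by
                apply Finset.sum_congr rfl
                intro w _
                exact (hexp' w).symm
            _ = μ z := hμt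
      have hmem : ((∑ j, |a' j| ^ p) ^ (1/p)) ∈ freeNormSet (0:X) (V : Set X) p μ := by
        refine ⟨n, a', x', y', ?_, ?_, ?_, ?_, rfl⟩
        · intro j
          simp only [hx']
          by_cases h : P (x j) = P (y j)
          · rw [if_pos h]; exact hvV
          · rw [if_neg h, ← hrange]; exact ⟨x j, rfl⟩
        · intro j
          simp only [hy']
          by_cases h : P (x j) = P (y j)
          · rw [if_pos h]; exact V.zero_mem
          · rw [if_neg h, ← hrange]; exact ⟨y j, rfl⟩
        · intro j
          simp only [hx', hy']
          by_cases h : P (x j) = P (y j)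
          · rw [if_pos h, if_pos h]; exact hv0
          · rw [if_neg h, if_neg h]; exact h
        · funext z
          rw [← hcore z]
          apply Finset.sum_congr rfl
          intro j _
          simp only [ha', hx', hy']
          by_cases h : P (x j) = P (y j)
          · rw [if_pos h, if_pos h, if_pos h, h]
            ring
          · rw [if_neg h, if_neg h, if_neg h]
            have hdist : dist (P (x j)) (P (y j)) ≠ 0 := dist_ne_zero.mpr h
            field_simp
      have hsum : (∑ j, |a' j| ^ p) ≤ ∑ j, (C * |a j|) ^ p := by
        apply Finset.sum_le_sum
        intro j _
        by_cases h : P (x j) = P (y j)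
        · simp only [ha', if_pos h]
          rw [abs_zero, Real.zero_rpow hp0.ne']
          exact Real.rpow_nonneg (mul_nonneg hC (abs_nonneg _)) p
        · simp only [ha', if_neg h]
          apply Real.rpow_le_rpow (abs_nonneg _) _ hp0.le
          rw [abs_mul, abs_of_nonneg dist_nonneg]
          have h1 : dist (P (x j)) (P (y j)) ≤ C * dist (x j) (y j) := by
            rw [dist_eq_norm, dist_eq_norm]
            calc ‖P (x j) - P (y j)‖ = ‖P (x j - y j)‖ := by rw [map_sub]
              _ ≤ ‖P‖ * ‖x j - y j‖ := P.le_opNorm _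
              _ ≤ C * ‖x j - y j‖ := mul_le_mul_of_nonneg_right hnorm (norm_nonneg _)
          have h2 : |c j| = |a j| / dist (x j) (y j) := by
            rw [hc]
            simp only
            rw [abs_div, abs_of_nonneg dist_nonneg]
          have hdpos : (0:ℝ) < dist (x j) (y j) :=
            lt_of_le_of_ne dist_nonneg (Ne.symm (hdne j))
          rw [h2, div_mul_eq_mul_div, div_le_iff₀ hdpos]
          calc |a j| * dist (P (x j)) (P (y j)) ≤ |a j| * (C * dist (x j) (y j)) :=
              mul_le_mul_of_nonneg_left h1 (abs_nonneg _)
            _ = C * |a j| * dist (x j) (y j) := by ring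
      have hle : (∑ j, |a' j| ^ p) ^ (1/p) ≤ C * (∑ j, |a j| ^ p) ^ (1/p) := by
        have e1 : ∑ j, (C * |a j|) ^ p = C ^ p * ∑ j, |a j| ^ p := by
          rw [Finset.mul_sum]
          apply Finset.sum_congr rfl
          intro j _
          rw [Real.mul_rpow hC (abs_nonneg _)]
        calc (∑ j, |a' j| ^ p) ^ (1/p) ≤ (∑ j, (C * |a j|) ^ p) ^ (1/p) :=
            Real.rpow_le_rpow
              (Finset.sum_nonneg fun j _ => Real.rpow_nonneg (abs_nonneg _) _) hsum
              (by positivity)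
          _ = (C ^ p * ∑ j, |a j| ^ p) ^ (1/p) := by rw [e1]
          _ = (C ^ p) ^ (1/p) * (∑ j, |a j| ^ p) ^ (1/p) :=
            Real.mul_rpow (Real.rpow_nonneg hC _)
              (Finset.sum_nonneg fun j _ => Real.rpow_nonneg (abs_nonneg _) _)
          _ = C * (∑ j, |a j| ^ p) ^ (1/p) := by
            rw [← Real.rpow_mul hC, mul_one_div_cancel hp0.ne', Real.rpow_one]
      exact le_trans (csInf_le hVbdd hmem) hle
    rcases eq_or_lt_of_le hC with hC0 | hC0
    · obtain ⟨r, hr⟩ := hXne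
      have hk := key r hr
      rw [← hC0] at hk ⊢
      simp only [zero_mul] at hk ⊢
      exact hk
    · have h1 : freeNormOn (0:X) (V : Set X) p μ / C ≤ freeNorm (0:X) p μ := by
        apply le_csInf hXne
        intro r hr
        rw [div_le_iff₀ hC0]
        calc freeNormOn (0:X) (V : Set X) p μ ≤ C * r := key r hr
          _ = r * C := mul_comm _ _
      have h2 := (div_le_iff₀ hC0).mp h1
      linarith
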